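/- Under the stated boundedness assumptions: ‖d^k‖ → 0 and r(x^k) → 0 as k → ∞, where r(x) := ‖x − prox_g(x − ∇f(x))‖ for x ∈ cl(dom g); the set ω(x⁰) of accumulation points of {x^k} is nonempty and compact; every point of ω(x⁰) is a stationary point of F; and F is constant on ω(x⁰), equal to the limit F̄ := lim_{k→∞} F(x^k). -/

import Mathlib

open Set Filter
open scoped RealInnerProductSpace ENNReal

noncomputable section

attribute [local instance] Classical.propDecidable

variable {X : Type*} [NormedAddCommGroup X] [InnerProductSpace ℝ X] [FiniteDimensional ℝ X]

set_option linter.unusedSectionVars false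
set_option maxHeartbeats 1000000

lemma aux_pos_limit {A B : ℝ} (h : ∀ t : ℝ, 0 < t → t ≤ 1 → 0 ≤ A + t * B) : 0 ≤ A := by
  by_contra hA
  push_neg at hA
  rcases le_or_gt B 0 with hB | hB
  · have := h 1 one_pos le_rfl; nlinarith
  · have ht : (0:ℝ) < min 1 (-A / (2 * B)) := by
      refine lt_min one_pos (div_pos (by linarith) (by linarith))
    have h2 := h _ ht (min_le_left _ _)
    have h3 : min 1 (-A / (2 * B)) ≤ -A / (2 * B) := min_le_right _ _
    have h4 : (min 1 (-A / (2 * B))) * B ≤ (-A / (2 * B)) * B :=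
      mul_le_mul_of_nonneg_right h3 hB.le
    have h5 : (-A / (2 * B)) * B = -A / 2 := by field_simp
    nlinarith

lemma inner_G_expand (G : X →L[ℝ] X) (hsa : ∀ u v : X, ⟪G u, v⟫ = ⟪u, G v⟫)
    (v w : X) (t : ℝ) :
    ⟪v + t • w, G (v + t • w)⟫ = ⟪v, G v⟫ + 2 * t * ⟪w, G v⟫ + t ^ 2 * ⟪w, G w⟫ := by
  have hsym : ⟪v, G w⟫ = ⟪w, G v⟫ := by
    rw [← hsa v w, real_inner_comm]
  simp only [map_add, map_smul, inner_add_left, inner_add_right, real_inner_smul_left,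
    real_inner_smul_right, hsym]
  ring

lemma quad_eval (G : X →L[ℝ] X) (hsa : ∀ u v : X, ⟪G u, v⟫ = ⟪u, G v⟫)
    (a x p w : X) (t : ℝ) :
    ⟪a, (p + t • w) - x⟫ + (1/2) * ⟪(p + t • w) - x, G ((p + t • w) - x)⟫ =
    (⟪a, p - x⟫ + (1/2) * ⟪p - x, G (p - x)⟫) + t * (⟪a, w⟫ + ⟪w, G (p - x)⟫)
      + t^2/2 * ⟪w, G w⟫ := by
  have h : (p + t • w) - x = (p - x) + t • w := by abel
  rw [h, inner_G_expand G hsa, inner_add_right, real_inner_smul_right]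
  ring

lemma vi_of_min (g : X → ℝ) (s : Set X) (hg : ConvexOn ℝ s g)
    (G : X →L[ℝ] X) (hsa : ∀ u v : X, ⟪G u, v⟫ = ⟪u, G v⟫) (a x p : X) (hp : p ∈ s)
    (hmin : ∀ z ∈ s, ⟪a, p - x⟫ + (1/2) * ⟪p - x, G (p - x)⟫ + g p ≤
      ⟪a, z - x⟫ + (1/2) * ⟪z - x, G (z - x)⟫ + g z)
    (z : X) (hz : z ∈ s) :
    g p ≤ g z + ⟪a + G (p - x), z - p⟫ := by
  set w := z - p with hw
  have key : 0 ≤ (⟪a, w⟫ + ⟪w, G (p - x)⟫ + g z - g p) := by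
    apply aux_pos_limit (B := ⟪w, G w⟫ / 2)
    intro t ht ht1
    have hmem : p + t • w ∈ s := hg.1.add_smul_sub_mem hp hz ⟨ht.le, ht1⟩
    have hcvx : g (p + t • w) ≤ (1 - t) * g p + t * g z := by
      have heq : p + t • w = (1 - t) • p + t • z := by
        rw [hw]; module
      rw [heq]
      exact hg.2 hp hz (by linarith) ht.le (by ring)
    have h2 := hmin _ hmem
    rw [quad_eval G hsa] at h2
    have h3 : 0 ≤ t * (⟪a, w⟫ + ⟪w, G (p - x)⟫ + g z - g p) + t^2/2 * ⟪w, G w⟫ := by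
      nlinarith
    nlinarith
  have h4 : ⟪a + G (p - x), w⟫ = ⟪a, w⟫ + ⟪w, G (p - x)⟫ := by
    rw [inner_add_left, real_inner_comm (G (p - x)) w]
  rw [h4]; linarith

lemma gap_of_min (g : X → ℝ) (s : Set X) (hg : ConvexOn ℝ s g)
    (G : X →L[ℝ] X) (hsa : ∀ u v : X, ⟪G u, v⟫ = ⟪u, G v⟫)
    (μ : ℝ) (hGlb : ∀ u : X, μ * ‖u‖ ^ 2 ≤ ⟪u, G u⟫)
    (a x p y : X) (hp : p ∈ s) (hy : y ∈ s)
    (hmin : ∀ z ∈ s, ⟪a, p - x⟫ + (1/2) * ⟪p - x, G (p - x)⟫ + g p ≤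
      ⟪a, z - x⟫ + (1/2) * ⟪z - x, G (z - x)⟫ + g z) :
    μ / 4 * ‖y - p‖ ^ 2 ≤
      (⟪a, y - x⟫ + (1/2) * ⟪y - x, G (y - x)⟫ + g y) -
      (⟪a, p - x⟫ + (1/2) * ⟪p - x, G (p - x)⟫ + g p) := by
  set w := y - p with hw
  have hmem : p + (1/2 : ℝ) • w ∈ s := hg.1.add_smul_sub_mem hp hy ⟨by norm_num, by norm_num⟩
  have hcvx : g (p + (1/2 : ℝ) • w) ≤ (1/2) * g p + (1/2) * g y := by
    have heq : p + (1/2 : ℝ) • w = (1/2 : ℝ) • p + (1/2 : ℝ) • y := by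
      rw [hw]; module
    rw [heq]
    exact hg.2 hp hy (by norm_num) (by norm_num) (by norm_num)
  have h2 := hmin _ hmem
  rw [quad_eval G hsa] at h2
  have hy' : ⟪a, y - x⟫ + (1/2) * ⟪y - x, G (y - x)⟫ =
      (⟪a, p - x⟫ + (1/2) * ⟪p - x, G (p - x)⟫) + 1 * (⟪a, w⟫ + ⟪w, G (p - x)⟫)
      + 1^2/2 * ⟪w, G w⟫ := by
    have : y = p + (1:ℝ) • w := by rw [hw, one_smul]; abel
    rw [show y - x = (p + (1:ℝ) • w) - x by rw [← this]]
    rw [quad_eval G hsa]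
  have h5 := hGlb w
  nlinarith

lemma descent_lemma (f : X → ℝ) (fgrad : X → X) (O : Set X) (hO : IsOpen O)
    (hfgrad : ∀ z ∈ O, HasGradientAt f (fgrad z) z)
    (Γ : Set X) (hconv : Convex ℝ Γ) (hΓO : Γ ⊆ O)
    (L : ℝ)
    (hLip : ∀ a ∈ Γ, ∀ b ∈ Γ, ‖fgrad a - fgrad b‖ ≤ L * ‖a - b‖)
    {a b : X} (ha : a ∈ Γ) (hb : b ∈ Γ) :
    f b ≤ f a + ⟪fgrad a, b - a⟫ + L / 2 * ‖b - a‖ ^ 2 := by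
  set c : ℝ → X := fun t => a + t • (b - a) with hc
  have hcΓ : ∀ t ∈ Icc (0:ℝ) 1, c t ∈ Γ := fun t ht =>
    hconv.add_smul_sub_mem ha hb ht
  set ψ : ℝ → ℝ := fun t => f (c t) - t * ⟪fgrad a, b - a⟫ - L / 2 * ‖b - a‖ ^ 2 * t ^ 2
    with hψ
  have hder : ∀ t ∈ Icc (0:ℝ) 1, HasDerivAt ψ
      (⟪fgrad (c t), b - a⟫ - ⟪fgrad a, b - a⟫ - L * ‖b - a‖ ^ 2 * t) t := by
    intro t ht
    have hcd : HasDerivAt c (b - a) t := by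
      simpa [hc] using ((hasDerivAt_id t).smul_const (b - a)).const_add a
    have hfd : HasDerivAt (fun s => f (c s)) ⟪fgrad (c t), b - a⟫ t := by
      have h1 := (hfgrad (c t) (hΓO (hcΓ t ht))).hasFDerivAt
      have h2 := h1.comp_hasDerivAt t hcd
      simp only [InnerProductSpace.toDual_apply_apply] at h2
      exact h2
    have h3 : HasDerivAt (fun s : ℝ => s * ⟪fgrad a, b - a⟫) ⟪fgrad a, b - a⟫ t :=
      hasDerivAt_mul_const _
    have h4 : HasDerivAt (fun s : ℝ => L / 2 * ‖b - a‖ ^ 2 * s ^ 2)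
        (L * ‖b - a‖ ^ 2 * t) t := by
      have := (hasDerivAt_pow 2 t).const_mul (L / 2 * ‖b - a‖ ^ 2)
      exact this.congr_deriv (by ring)
    exact (hfd.sub h3).sub h4
  have hanti : AntitoneOn ψ (Icc 0 1) := by
    apply antitoneOn_of_deriv_nonpos (convex_Icc 0 1)
    · intro t ht
      exact (hder t ht).continuousAt.continuousWithinAt
    · intro t ht
      rw [interior_Icc] at ht
      exact ((hder t (Ioo_subset_Icc_self ht)).differentiableAt).differentiableWithinAt
    · intro t ht
      rw [interior_Icc] at ht
      rw [(hder t (Ioo_subset_Icc_self ht)).deriv]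
      have h5 : ⟪fgrad (c t) - fgrad a, b - a⟫ ≤ L * t * ‖b - a‖ ^ 2 := by
        calc ⟪fgrad (c t) - fgrad a, b - a⟫ ≤ ‖fgrad (c t) - fgrad a‖ * ‖b - a‖ :=
              real_inner_le_norm _ _
          _ ≤ (L * ‖c t - a‖) * ‖b - a‖ := by
              apply mul_le_mul_of_nonneg_right _ (norm_nonneg _)
              exact hLip _ (hcΓ t (Ioo_subset_Icc_self ht)) _ ha
          _ = L * t * ‖b - a‖ ^ 2 := by
              have : c t - a = t • (b - a) := by simp [hc]
              rw [this, norm_smul, Real.norm_eq_abs, abs_of_pos ht.1]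
              ring
      rw [inner_sub_left] at h5
      linarith
  have h6 := hanti (left_mem_Icc.mpr zero_le_one) (right_mem_Icc.mpr zero_le_one) zero_le_one
  simp only [hψ, hc] at h6
  simp only [zero_smul, add_zero, one_smul, add_sub_cancel] at h6
  norm_num at h6
  linarith


/-- `g` extended by `+∞` outside its domain `s`. -/
def extE (g : X → ℝ) (s : Set X) (x : X) : EReal := if x ∈ s then (g x : EReal) else ⊤

/-- The objective `F = f + g`, extended-real valued. -/
def FE (f g : X → ℝ) (s : Set X) (x : X) : EReal := (f x : EReal) + extE g s x

/-- The strongly convex model `Θ_k` with base point `xk` and metric `G`, evaluated at `z`. -/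
def Theta (f g : X → ℝ) (fgrad : X → X) (G : X →L[ℝ] X) (xk z : X) : ℝ :=
  f xk + ⟪fgrad xk, z - xk⟫ + (1/2) * ⟪z - xk, G (z - xk)⟫ + g z

/-- `p` is the proximal point `prox^D_{γ g}(u)`, i.e. the minimizer over `dom g` of
`z ↦ (1/(2γ)) ⟪ z - u, D (z - u) ⟫ + g z`. -/
def IsProxPt (γ : ℝ) (D : X →L[ℝ] X) (g : X → ℝ) (s : Set X) (u p : X) : Prop :=
  p ∈ s ∧ ∀ z ∈ s,
    (1 / (2 * γ)) * ⟪p - u, D (p - u)⟫ + g p ≤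
      (1 / (2 * γ)) * ⟪z - u, D (z - u)⟫ + g z

/-- The convex subdifferential of (the extension by `+∞` of) `g` at `x`. -/
def SubdiffAt (g : X → ℝ) (s : Set X) (x : X) : Set X :=
  {v : X | x ∈ s ∧ ∀ z ∈ s, g x + ⟪v, z - x⟫ ≤ g z}

/-- `x` is a stationary point of `F = f + g`, i.e. `0 ∈ ∇f(x) + ∂g(x)`. -/
def IsStationaryPtFG (fgrad : X → X) (g : X → ℝ) (s : Set X) (x : X) : Prop :=
  -fgrad x ∈ SubdiffAt g s x


lemma prox_compare (g : X → ℝ) (s : Set X) (G : X →L[ℝ] X) (μbar : ℝ) (hμbar : 0 ≤ μbar)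
    (hGub : ∀ v : X, ‖G v‖ ≤ μbar * ‖v‖)
    (a xk p q : X)
    (h1 : g p ≤ g q + ⟪p - (xk - a), q - p⟫)
    (h2 : g q ≤ g p + ⟪a + G (q - xk), p - q⟫) :
    ‖p - q‖ ≤ (1 + μbar) * ‖q - xk‖ := by
  have h4 : ⟪a + G (q - xk), p - q⟫ = - ⟪a + G (q - xk), q - p⟫ := by
    rw [← inner_neg_right]
    congr 1
    abel
  have h3 : 0 ≤ ⟪p - (xk - a), q - p⟫ - ⟪a + G (q - xk), q - p⟫ := by
    linarith [h1, h2, h4]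
  have h5 : (p - (xk - a)) - (a + G (q - xk)) = (p - q) + ((q - xk) - G (q - xk)) := by
    abel
  have h7 : 0 ≤ ⟪(p - q) + ((q - xk) - G (q - xk)), q - p⟫ := by
    rw [← h5, inner_sub_left]
    exact h3
  have h8 : ⟪(p - q) + ((q - xk) - G (q - xk)), q - p⟫
      = - ‖p - q‖ ^ 2 + ⟪(q - xk) - G (q - xk), q - p⟫ := by
    rw [inner_add_left]
    have h8a : ⟪p - q, q - p⟫ = - ‖p - q‖ ^ 2 := by
      rw [show q - p = -(p - q) by abel, inner_neg_right, real_inner_self_eq_norm_sq]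
    rw [h8a]
  have h9 : ‖p - q‖ ^ 2 ≤ ⟪(q - xk) - G (q - xk), q - p⟫ := by
    rw [h8] at h7
    linarith
  have h10 : ⟪(q - xk) - G (q - xk), q - p⟫ ≤ (1 + μbar) * ‖q - xk‖ * ‖p - q‖ := by
    calc ⟪(q - xk) - G (q - xk), q - p⟫ ≤ ‖(q - xk) - G (q - xk)‖ * ‖q - p‖ :=
          real_inner_le_norm _ _
      _ ≤ (‖q - xk‖ + ‖G (q - xk)‖) * ‖q - p‖ :=
          mul_le_mul_of_nonneg_right (norm_sub_le _ _) (norm_nonneg _)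
      _ ≤ (‖q - xk‖ + μbar * ‖q - xk‖) * ‖q - p‖ :=
          mul_le_mul_of_nonneg_right (by linarith [hGub (q - xk)]) (norm_nonneg _)
      _ = (1 + μbar) * ‖q - xk‖ * ‖p - q‖ := by rw [norm_sub_rev q p]; ring
  rcases le_or_gt ‖p - q‖ ((1 + μbar) * ‖q - xk‖) with hle | hgt
  · exact hle
  · exfalso
    have hn : 0 < ‖p - q‖ := lt_of_le_of_lt (by positivity) hgt
    nlinarith [mul_lt_mul_of_pos_right hgt hn]

/-- `‖d^k‖ → 0`, `r(x^k) → 0`, the accumulation set is nonempty and compact,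
consists of stationary points, and `F` is constant on it. -/
theorem vmipg_subsequential
    (f g : X → ℝ) (domg O : Set X) (fgrad : X → X)
    (hdom : domg.Nonempty) (hO : IsOpen O) (hclO : closure domg ⊆ O)
    (hgconv : ConvexOn ℝ domg g) (hgcont : ContinuousOn g domg)
    (hglsc : LowerSemicontinuous (extE g domg))
    (hflsc : LowerSemicontinuous f)
    (hfC2 : ContDiffOn ℝ 2 f O)
    (hfgrad : ∀ z ∈ O, HasGradientAt f (fgrad z) z)
    (hFlb : ∃ c : ℝ, ∀ z ∈ domg, c ≤ f z + g z)
    (μ σ β : ℝ) (hμ : 0 < μ) (hβ : 0 < β ∧ β < 1) (hσ : 0 < σ ∧ σ < (1/2) * min 1 μ)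
    (eps : ℕ → ℝ) (heps : ∀ k, 0 < eps k) (hepsbd : ∃ C : ℝ, ∀ k, eps k ≤ C)
    (kbar : ℕ) (hkbar : ∀ k, kbar ≤ k → eps k ≤ μ / 10)
    (x y xbar : ℕ → X) (G : ℕ → X →L[ℝ] X) (m : ℕ → ℕ)
    (hx0 : x 0 ∈ domg)
    (hGsa : ∀ k, ∀ u v : X, ⟪G k u, v⟫ = ⟪u, G k v⟫)
    (hGlb : ∀ k, ∀ u : X, μ * ‖u‖ ^ 2 ≤ ⟪u, G k u⟫)
    (hxbar : ∀ k, xbar k ∈ domg ∧ ∀ z ∈ domg,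
      Theta f g fgrad (G k) (x k) (xbar k) ≤ Theta f g fgrad (G k) (x k) z)
    (hy : ∀ k, y k ∈ domg ∧
      Theta f g fgrad (G k) (x k) (y k) < Theta f g fgrad (G k) (x k) (x k) ∧
      Theta f g fgrad (G k) (x k) (y k) - Theta f g fgrad (G k) (x k) (xbar k)
        ≤ eps k * ‖y k - x k‖ ^ 2)
    (hls : ∀ k,
      (FE f g domg (x k + β ^ (m k) • (y k - x k))
        ≤ ((f (x k) + g (x k) - σ * β ^ (m k) * ‖y k - x k‖ ^ 2 : ℝ) : EReal)) ∧
      ∀ j < m k, ¬ (FE f g domg (x k + β ^ j • (y k - x k))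
        ≤ ((f (x k) + g (x k) - σ * β ^ j * ‖y k - x k‖ ^ 2 : ℝ) : EReal)))
    (hupd : ∀ k,
      (FE f g domg (y k) < FE f g domg (x k + β ^ (m k) • (y k - x k)) ∧ x (k+1) = y k) ∨
      ((¬ FE f g domg (y k) < FE f g domg (x k + β ^ (m k) • (y k - x k))) ∧
        x (k+1) = x k + β ^ (m k) • (y k - x k)))
    (hxbdd : ∃ R : ℝ, ∀ k, ‖x k‖ ≤ R)
    (μbar : ℝ) (hμbar : 0 < μbar) (hGub : ∀ k, ‖G k‖ ≤ μbar)
    (Γ : Set X) (hΓc : IsCompact Γ) (hΓconv : Convex ℝ Γ) (hΓO : Γ ⊆ O)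
    (hΓx : ∀ k, x k ∈ Γ) (hΓy : ∀ k, y k ∈ Γ)
    (Lf : ℝ) (hLf : 0 < Lf) (hLip : LipschitzOnWith (Real.toNNReal Lf) fgrad Γ)
    (prox1 : X → X)
    (hprox1 : ∀ u : X, IsProxPt 1 (ContinuousLinearMap.id ℝ X) g domg u (prox1 u)) :
    Tendsto (fun k => ‖y k - x k‖) atTop (nhds 0) ∧
    Tendsto (fun k => ‖x k - prox1 (x k - fgrad (x k))‖) atTop (nhds 0) ∧
    {p : X | MapClusterPt p atTop x}.Nonempty ∧
    IsCompact {p : X | MapClusterPt p atTop x} ∧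
    ∃ Fbar : ℝ, Tendsto (fun k => f (x k) + g (x k)) atTop (nhds Fbar) ∧
      ∀ p : X, MapClusterPt p atTop x →
        IsStationaryPtFG fgrad g domg p ∧ f p + g p = Fbar := by
  obtain ⟨hβ0, hβ1⟩ := hβ
  obtain ⟨hσ0, hσ1⟩ := hσ
  obtain ⟨C, hC⟩ := hepsbd
  have hC0 : 0 < C := lt_of_lt_of_le (heps 0) (hC 0)
  have hsconv : Convex ℝ domg := hgconv.1
  have hμ2σ : 0 < μ - 2 * σ := by
    have h1 : (1/2 : ℝ) * min 1 μ ≤ (1/2) * μ :=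
      mul_le_mul_of_nonneg_left (min_le_right 1 μ) (by norm_num)
    linarith
  -- FE basic facts
  have FE_eq : ∀ z ∈ domg, FE f g domg z = ((f z + g z : ℝ) : EReal) := by
    intro z hz
    simp [FE, extE, hz, ← EReal.coe_add]
  have FE_mem : ∀ (z : X) (r : ℝ), FE f g domg z ≤ (r : EReal) → z ∈ domg := by
    intro z r h
    by_contra hz
    rw [FE, extE, if_neg hz] at h
    simp at h
  -- iterates stay in the domain
  have hxdom : ∀ k, x k ∈ domg := by
    intro k
    induction k with
    | zero => exact hx0
    | succ n _ =>
      rcases hupd n with ⟨_, h2⟩ | ⟨_, h2⟩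
      · rw [h2]; exact (hy n).1
      · rw [h2]; exact FE_mem _ _ (hls n).1
  set Fv : ℕ → ℝ := fun k => f (x k) + g (x k) with hFv
  -- sufficient decrease
  have hdec : ∀ k, Fv (k+1) + σ * β ^ (m k) * ‖y k - x k‖ ^ 2 ≤ Fv k := by
    intro k
    have hline := (hls k).1
    have key : FE f g domg (x (k+1))
        ≤ ((f (x k) + g (x k) - σ * β ^ (m k) * ‖y k - x k‖ ^ 2 : ℝ) : EReal) := by
      rcases hupd k with ⟨h1, h2⟩ | ⟨h1, h2⟩
      · rw [h2]; exact le_trans (le_of_lt h1) hline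
      · rw [h2]; exact hline
    rw [FE_eq _ (hxdom (k+1)), EReal.coe_le_coe_iff] at key
    simp only [hFv]
    linarith
  have hmono : Antitone Fv := by
    apply antitone_nat_of_succ_le
    intro n
    have h0 : 0 ≤ σ * β ^ (m n) * ‖y n - x n‖ ^ 2 := by positivity
    linarith [hdec n]
  obtain ⟨c, hc⟩ := hFlb
  have hlb : ∀ k, c ≤ Fv k := fun k => hc _ (hxdom k)
  have hbdd : BddBelow (range Fv) := ⟨c, by rintro r ⟨k, rfl⟩; exact hlb k⟩
  set Fbar : ℝ := ⨅ k, Fv k with hFbardef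
  have hFbar : Tendsto Fv atTop (nhds Fbar) := tendsto_atTop_ciInf hmono hbdd
  -- step terms tend to zero
  have hterm : Tendsto (fun k => σ * β ^ (m k) * ‖y k - x k‖ ^ 2) atTop (nhds 0) := by
    have h1 : Tendsto (fun k => Fv k - Fv (k+1)) atTop (nhds 0) := by
      have h2 := hFbar.sub (hFbar.comp (tendsto_add_atTop_nat 1))
      simpa using h2
    exact squeeze_zero (fun k => by positivity) (fun k => by linarith [hdec k]) h1
  -- Lipschitz gradient in norm form
  have hLf0 : 0 ≤ Lf := hLf.le
  have hLip' : ∀ u ∈ Γ, ∀ v ∈ Γ, ‖fgrad u - fgrad v‖ ≤ Lf * ‖u - v‖ := by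
    intro u hu v hv
    have h1 := hLip.dist_le_mul u hu v hv
    rw [dist_eq_norm, dist_eq_norm] at h1
    calc ‖fgrad u - fgrad v‖ ≤ (Real.toNNReal Lf : ℝ) * ‖u - v‖ := h1
      _ = Lf * ‖u - v‖ := by rw [Real.coe_toNNReal _ hLf0]
  -- model decrease at y k
  have hmod : ∀ k, ⟪fgrad (x k), y k - x k⟫ + (1/2) * ⟪y k - x k, (G k) (y k - x k)⟫
      + g (y k) < g (x k) := by
    intro k
    have h1 := (hy k).2.1
    simp only [Theta, sub_self, inner_zero_right, map_zero, inner_zero_left] at h1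
    linarith
  -- successful linesearch whenever the step is small enough
  have hsucc : ∀ k (j : ℕ), β ^ j * Lf ≤ μ - 2*σ →
      FE f g domg (x k + β ^ j • (y k - x k))
        ≤ ((f (x k) + g (x k) - σ * β ^ j * ‖y k - x k‖ ^ 2 : ℝ) : EReal) := by
    intro k j hj
    have hα0 : 0 < β ^ j := pow_pos hβ0 j
    have hα1 : β ^ j ≤ 1 := pow_le_one₀ hβ0.le hβ1.le
    set α := β ^ j with hα
    set d := y k - x k with hd
    set w := x k + α • d with hwdef
    have hwΓ : w ∈ Γ := hΓconv.add_smul_sub_mem (hΓx k) (hΓy k) ⟨hα0.le, hα1⟩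
    have hwdom : w ∈ domg := hsconv.add_smul_sub_mem (hxdom k) (hy k).1 ⟨hα0.le, hα1⟩
    have hdes := descent_lemma f fgrad O hO hfgrad Γ hΓconv hΓO Lf hLip' (hΓx k) hwΓ
    have hwx : w - x k = α • d := by simp [hwdef]
    rw [hwx, real_inner_smul_right, norm_smul, Real.norm_eq_abs, abs_of_pos hα0,
      mul_pow] at hdes
    have hgw : g w ≤ (1 - α) * g (x k) + α * g (y k) := by
      have heq : w = (1 - α) • x k + α • y k := by
        simp only [hwdef, hd]; module
      rw [heq]
      exact hgconv.2 (hxdom k) (hy k).1 (by linarith) hα0.le (by ring)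
    have hquad := hGlb k d
    have hmodk := hmod k
    rw [FE_eq _ hwdom, EReal.coe_le_coe_iff]
    have hd2 : 0 ≤ ‖d‖ ^ 2 := sq_nonneg _
    have hmul : α * (Lf * α) ≤ α * (μ - 2*σ) := by
      apply mul_le_mul_of_nonneg_left _ hα0.le
      rw [mul_comm]; exact hj
    nlinarith [mul_le_mul_of_nonneg_right hmul hd2,
      mul_le_mul_of_nonneg_left (hmodk.le) hα0.le,
      mul_le_mul_of_nonneg_left hquad (by positivity : (0:ℝ) ≤ α / 2)]
  -- stepsize lower bound
  set δ : ℝ := min 1 (β * (μ - 2*σ) / Lf) with hδdef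
  have hδ0 : 0 < δ := lt_min one_pos (by positivity)
  have hstep : ∀ k, δ ≤ β ^ (m k) := by
    intro k
    rcases Nat.eq_zero_or_pos (m k) with h0 | h0
    · rw [h0, pow_zero]; exact min_le_left _ _
    · have hfail := (hls k).2 (m k - 1) (Nat.sub_lt h0 one_pos)
      have hbig : ¬ (β ^ (m k - 1) * Lf ≤ μ - 2*σ) := fun hcon => hfail (hsucc k _ hcon)
      push_neg at hbig
      have hmk : β ^ (m k) = β * β ^ (m k - 1) := by
        rw [← pow_succ']
        congr 1
        omega
      have h1 : (μ - 2*σ) / Lf < β ^ (m k - 1) := (div_lt_iff₀ hLf).mpr (by linarith)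
      calc δ ≤ β * (μ - 2*σ) / Lf := min_le_right _ _
        _ = β * ((μ - 2*σ) / Lf) := by ring
        _ ≤ β * β ^ (m k - 1) := mul_le_mul_of_nonneg_left h1.le hβ0.le
        _ = β ^ (m k) := hmk.symm
  -- ‖d k‖ → 0
  have hdsq : Tendsto (fun k => ‖y k - x k‖ ^ 2) atTop (nhds 0) := by
    have h2 : Tendsto (fun k => (σ * δ)⁻¹ * (σ * β ^ (m k) * ‖y k - x k‖ ^ 2)) atTop
        (nhds 0) := by
      have := hterm.const_mul (σ * δ)⁻¹
      simpa using this
    apply squeeze_zero (fun k => by positivity) _ h2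
    intro k
    have hsd : 0 < σ * δ := by positivity
    have h3 : σ * δ * ‖y k - x k‖ ^ 2 ≤ σ * β ^ (m k) * ‖y k - x k‖ ^ 2 := by
      have h := mul_le_mul_of_nonneg_right (hstep k) (sq_nonneg ‖y k - x k‖)
      have h4 := mul_le_mul_of_nonneg_left h hσ0.le
      ring_nf at h4 ⊢
      linarith
    calc ‖y k - x k‖ ^ 2 = (σ * δ)⁻¹ * (σ * δ * ‖y k - x k‖ ^ 2) := by
          field_simp
      _ ≤ (σ * δ)⁻¹ * (σ * β ^ (m k) * ‖y k - x k‖ ^ 2) :=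
          mul_le_mul_of_nonneg_left h3 (by positivity)
  have hdto0 : Tendsto (fun k => ‖y k - x k‖) atTop (nhds 0) := by
    have h1 := hdsq.sqrt
    have heq : (fun k => Real.sqrt (‖y k - x k‖ ^ 2)) = fun k => ‖y k - x k‖ :=
      funext fun k => Real.sqrt_sq (norm_nonneg _)
    rwa [heq, Real.sqrt_zero] at h1

  -- variational inequality for xbar k
  have hminform : ∀ k, ∀ z ∈ domg,
      ⟪fgrad (x k), xbar k - x k⟫ + (1/2) * ⟪xbar k - x k, (G k) (xbar k - x k)⟫ + g (xbar k) ≤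
      ⟪fgrad (x k), z - x k⟫ + (1/2) * ⟪z - x k, (G k) (z - x k)⟫ + g z := by
    intro k z hz
    have h1 := (hxbar k).2 z hz
    simp only [Theta] at h1
    linarith
  have hVI : ∀ k, ∀ z ∈ domg, g (xbar k) ≤
      g z + ⟪fgrad (x k) + (G k) (xbar k - x k), z - xbar k⟫ := fun k z hz =>
    vi_of_min g domg hgconv (G k) (hGsa k) (fgrad (x k)) (x k) (xbar k) (hxbar k).1
      (hminform k) z hz
  -- gap bound: ‖y k - xbar k‖² ≤ (4 C / μ) ‖d k‖²
  have hgap : ∀ k, μ / 4 * ‖y k - xbar k‖ ^ 2 ≤ C * ‖y k - x k‖ ^ 2 := by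
    intro k
    have h1 := gap_of_min g domg hgconv (G k) (hGsa k) μ (hGlb k) (fgrad (x k)) (x k)
      (xbar k) (y k) (hxbar k).1 (hy k).1 (hminform k)
    have h2 := (hy k).2.2
    simp only [Theta] at h2
    have h3 : eps k * ‖y k - x k‖ ^ 2 ≤ C * ‖y k - x k‖ ^ 2 :=
      mul_le_mul_of_nonneg_right (hC k) (sq_nonneg _)
    linarith
  -- ‖xbar k - x k‖ → 0
  have hKpos : 0 < 2 + 8 * C / μ := by positivity
  have hebarsq : ∀ k, ‖xbar k - x k‖ ^ 2 ≤ (2 + 8 * C / μ) * ‖y k - x k‖ ^ 2 := by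
    intro k
    have h1 : ‖xbar k - x k‖ ≤ ‖xbar k - y k‖ + ‖y k - x k‖ := norm_sub_le_norm_sub_add_norm_sub _ _ _
    have h2 : ‖y k - xbar k‖ ^ 2 ≤ 4 * C / μ * ‖y k - x k‖ ^ 2 := by
      have hg := hgap k
      rw [← sub_nonneg]
      have heq : 4 * C / μ * ‖y k - x k‖ ^ 2 - ‖y k - xbar k‖ ^ 2
          = (4 / μ) * (C * ‖y k - x k‖ ^ 2 - μ / 4 * ‖y k - xbar k‖ ^ 2) := by
        field_simp
      rw [heq]
      exact mul_nonneg (by positivity) (by linarith)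
    have h5 : ‖xbar k - y k‖ = ‖y k - xbar k‖ := norm_sub_rev _ _
    have h6 : ‖xbar k - x k‖ ^ 2 ≤ (‖y k - xbar k‖ + ‖y k - x k‖) ^ 2 := by
      rw [← h5]
      exact pow_le_pow_left₀ (norm_nonneg _) h1 2
    have h7 : ‖xbar k - x k‖ ^ 2 ≤ 2 * ‖y k - xbar k‖ ^ 2 + 2 * ‖y k - x k‖ ^ 2 := by
      nlinarith [sq_nonneg (‖y k - xbar k‖ - ‖y k - x k‖)]
    have h9 : 2 * (4 * C / μ * ‖y k - x k‖ ^ 2) = 8 * C / μ * ‖y k - x k‖ ^ 2 := by ring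
    have h10 : (2 + 8 * C / μ) * ‖y k - x k‖ ^ 2
        = 2 * ‖y k - x k‖ ^ 2 + 8 * C / μ * ‖y k - x k‖ ^ 2 := by ring
    linarith
  have hebarsq0 : Tendsto (fun k => ‖xbar k - x k‖ ^ 2) atTop (nhds 0) := by
    have h2 : Tendsto (fun k => (2 + 8 * C / μ) * ‖y k - x k‖ ^ 2) atTop (nhds 0) := by
      have := hdsq.const_mul (2 + 8 * C / μ); simpa using this
    exact squeeze_zero (fun k => by positivity) hebarsq h2
  have hebar : Tendsto (fun k => ‖xbar k - x k‖) atTop (nhds 0) := by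
    have h1 := hebarsq0.sqrt
    have heq : (fun k => Real.sqrt (‖xbar k - x k‖ ^ 2)) = fun k => ‖xbar k - x k‖ :=
      funext fun k => Real.sqrt_sq (norm_nonneg _)
    rwa [heq, Real.sqrt_zero] at h1
  -- variational inequality for the prox point
  have hVIp : ∀ u : X, ∀ z ∈ domg, g (prox1 u) ≤ g z + ⟪prox1 u - u, z - prox1 u⟫ := by
    intro u z hz
    have hmin2 : ∀ w ∈ domg,
        ⟪(0:X), prox1 u - u⟫ + (1/2) * ⟪prox1 u - u,
          (ContinuousLinearMap.id ℝ X) (prox1 u - u)⟫ + g (prox1 u) ≤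
        ⟪(0:X), w - u⟫ + (1/2) * ⟪w - u, (ContinuousLinearMap.id ℝ X) (w - u)⟫ + g w := by
      intro w hw
      have h1 := (hprox1 u).2 w hw
      simp only [ContinuousLinearMap.id_apply, inner_zero_left, zero_add]
      norm_num at h1
      simpa [real_inner_self_eq_norm_sq] using h1
    have h2 := vi_of_min g domg hgconv (ContinuousLinearMap.id ℝ X)
      (fun a b => by simp) (0:X) u (prox1 u) (hprox1 u).1 hmin2 z hz
    simpa using h2
  -- prox residual bound
  have hresbd : ∀ k, ‖x k - prox1 (x k - fgrad (x k))‖ ≤ (2 + μbar) * ‖xbar k - x k‖ := by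
    intro k
    have hGv : ∀ v : X, ‖(G k) v‖ ≤ μbar * ‖v‖ := by
      intro v
      calc ‖(G k) v‖ ≤ ‖G k‖ * ‖v‖ := (G k).le_opNorm v
        _ ≤ μbar * ‖v‖ := mul_le_mul_of_nonneg_right (hGub k) (norm_nonneg _)
    have h1 := hVIp (x k - fgrad (x k)) (xbar k) (hxbar k).1
    have h2 := hVI k (prox1 (x k - fgrad (x k))) (hprox1 (x k - fgrad (x k))).1
    have h12 := prox_compare g domg (G k) μbar hμbar.le hGv (fgrad (x k)) (x k)
      (prox1 (x k - fgrad (x k))) (xbar k) h1 h2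
    calc ‖x k - prox1 (x k - fgrad (x k))‖
        ≤ ‖x k - xbar k‖ + ‖xbar k - prox1 (x k - fgrad (x k))‖ :=
          norm_sub_le_norm_sub_add_norm_sub _ _ _
      _ ≤ ‖xbar k - x k‖ + (1 + μbar) * ‖xbar k - x k‖ := by
          rw [norm_sub_rev (x k) (xbar k)]
          refine add_le_add le_rfl ?_
          rw [norm_sub_rev]
          exact h12
      _ = (2 + μbar) * ‖xbar k - x k‖ := by ring
  have hres : Tendsto (fun k => ‖x k - prox1 (x k - fgrad (x k))‖) atTop (nhds 0) := by
    have h2 : Tendsto (fun k => (2 + μbar) * ‖xbar k - x k‖) atTop (nhds 0) := by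
      have := hebar.const_mul (2 + μbar); simpa using this
    exact squeeze_zero (fun k => norm_nonneg _) hresbd h2

  -- operator norm bound in pointwise form
  have hGv : ∀ k (v : X), ‖(G k) v‖ ≤ μbar * ‖v‖ := by
    intro k v
    calc ‖(G k) v‖ ≤ ‖G k‖ * ‖v‖ := (G k).le_opNorm v
      _ ≤ μbar * ‖v‖ := mul_le_mul_of_nonneg_right (hGub k) (norm_nonneg _)
  -- the cluster set
  have hmaple : map x atTop ≤ 𝓟 Γ :=
    le_principal_iff.mpr (mem_map.mpr (Eventually.of_forall hΓx))
  have hSsub : {p : X | MapClusterPt p atTop x} ⊆ Γ := by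
    intro p hp
    have h1 : ClusterPt p (𝓟 Γ) := hp.clusterPt.mono hmaple
    have h2 : p ∈ closure Γ := mem_closure_iff_clusterPt.mpr h1
    rwa [hΓc.isClosed.closure_eq] at h2
  have hSne : {p : X | MapClusterPt p atTop x}.Nonempty := by
    obtain ⟨p, _, hp⟩ := hΓc.exists_clusterPt hmaple
    exact ⟨p, hp⟩
  have hSclosed : IsClosed {p : X | MapClusterPt p atTop x} := isClosed_setOf_clusterPt
  have hScomp : IsCompact {p : X | MapClusterPt p atTop x} :=
    hΓc.of_isClosed_subset hSclosed hSsub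
  refine ⟨hdto0, hres, hSne, hScomp, Fbar, hFbar, ?_⟩
  intro p hp
  obtain ⟨ψ, hψmono, hψtend⟩ := TopologicalSpace.FirstCountableTopology.tendsto_subseq hp
  have hpΓ : p ∈ Γ := hSsub hp
  have hfcont : ContinuousAt f p := (hfC2.continuousOn).continuousAt (hO.mem_nhds (hΓO hpΓ))
  have hfx : Tendsto (fun j => f (x (ψ j))) atTop (nhds (f p)) := hfcont.tendsto.comp hψtend
  have hFψ : Tendsto (fun j => Fv (ψ j)) atTop (nhds Fbar) := hFbar.comp hψmono.tendsto_atTop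
  have hgx : Tendsto (fun j => g (x (ψ j))) atTop (nhds (Fbar - f p)) := by
    have h1 := hFψ.sub hfx
    have heq : (fun j => Fv (ψ j) - f (x (ψ j))) = fun j => g (x (ψ j)) := by
      funext j
      simp [hFv]
    rwa [heq] at h1
  have hpdom : p ∈ domg := by
    by_contra hpd
    have htop : extE g domg p = ⊤ := by simp [extE, hpd]
    have h1 := hglsc p ((Fbar - f p + 1 : ℝ) : EReal) (by show ((Fbar - f p + 1 : ℝ) : EReal) < extE g domg p; rw [htop]; exact EReal.coe_lt_top _)
    have h2 : ∀ᶠ j in atTop, ((Fbar - f p + 1 : ℝ) : EReal) < extE g domg (x (ψ j)) :=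
      hψtend.eventually h1
    have h3 : ∀ᶠ j in atTop, Fbar - f p + 1 ≤ g (x (ψ j)) := by
      filter_upwards [h2] with j hj
      rw [extE, if_pos (hxdom (ψ j))] at hj
      exact_mod_cast hj.le
    have h4 := ge_of_tendsto hgx h3
    linarith
  have hgwithin : Tendsto (fun j => g (x (ψ j))) atTop (nhds (g p)) := by
    have hcw : ContinuousWithinAt g domg p := hgcont p hpdom
    have h1 : Tendsto (fun j => x (ψ j)) atTop (nhdsWithin p domg) :=
      tendsto_nhdsWithin_of_tendsto_nhds_of_eventually_within _ hψtend
        (Eventually.of_forall fun j => hxdom (ψ j))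
    exact hcw.tendsto.comp h1
  have hFp : f p + g p = Fbar := by
    have h1 := tendsto_nhds_unique hgwithin hgx
    linarith
  -- convergence of the auxiliary sequences along the subsequence
  have hxbarψ : Tendsto (fun j => xbar (ψ j)) atTop (nhds p) := by
    have h0 : Tendsto (fun j => xbar (ψ j) - x (ψ j)) atTop (nhds 0) := by
      rw [tendsto_zero_iff_norm_tendsto_zero]
      exact hebar.comp hψmono.tendsto_atTop
    have h1 := h0.add hψtend
    simp only [Function.comp] at h1 ⊢
    simpa using h1
  have hxp : Tendsto (fun j => ‖x (ψ j) - p‖) atTop (nhds 0) := by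
    rw [← tendsto_zero_iff_norm_tendsto_zero]
    have := hψtend.sub (tendsto_const_nhds (x := p))
    simpa [Function.comp] using this
  have hgradψ : Tendsto (fun j => fgrad (x (ψ j))) atTop (nhds (fgrad p)) := by
    rw [tendsto_iff_norm_sub_tendsto_zero]
    apply squeeze_zero (fun j => norm_nonneg _)
      (fun j => hLip' _ (hΓx (ψ j)) p hpΓ)
    have := hxp.const_mul Lf
    simpa using this
  have hGterm : Tendsto (fun j => (G (ψ j)) (xbar (ψ j) - x (ψ j))) atTop (nhds 0) := by
    rw [tendsto_zero_iff_norm_tendsto_zero]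
    apply squeeze_zero (fun j => norm_nonneg _) (fun j => hGv (ψ j) _)
    have := (hebar.comp hψmono.tendsto_atTop).const_mul μbar
    simpa [Function.comp] using this
  refine ⟨⟨hpdom, fun z hz => ?_⟩, hFp⟩
  have hA : Tendsto
      (fun j => ⟪fgrad (x (ψ j)) + (G (ψ j)) (xbar (ψ j) - x (ψ j)), z - xbar (ψ j)⟫)
      atTop (nhds ⟪fgrad p, z - p⟫) := by
    have h1 : Tendsto (fun j => fgrad (x (ψ j)) + (G (ψ j)) (xbar (ψ j) - x (ψ j)))
        atTop (nhds (fgrad p)) := by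
      have := hgradψ.add hGterm
      simpa using this
    have h2 : Tendsto (fun j => z - xbar (ψ j)) atTop (nhds (z - p)) :=
      tendsto_const_nhds.sub hxbarψ
    exact h1.inner h2
  have hbound : ∀ c : ℝ, c < g p → c ≤ g z + ⟪fgrad p, z - p⟫ := by
    intro c hc
    have hlt : ((c : ℝ) : EReal) < extE g domg p := by
      rw [extE, if_pos hpdom]
      exact_mod_cast hc
    have h1 := hglsc p _ hlt
    have h2 : ∀ᶠ j in atTop, c ≤ g z +
        ⟪fgrad (x (ψ j)) + (G (ψ j)) (xbar (ψ j) - x (ψ j)), z - xbar (ψ j)⟫ := by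
      filter_upwards [hxbarψ.eventually h1] with j hj
      rw [extE, if_pos (hxbar (ψ j)).1] at hj
      have hj' : c < g (xbar (ψ j)) := by exact_mod_cast hj
      linarith [hVI (ψ j) z hz]
    exact ge_of_tendsto (tendsto_const_nhds.add hA) h2
  have hfinal : g p ≤ g z + ⟪fgrad p, z - p⟫ := by
    by_contra hcon
    push_neg at hcon
    have h1 := hbound ((g z + ⟪fgrad p, z - p⟫ + g p) / 2) (by linarith)
    linarith
  have hneg : ⟪-fgrad p, z - p⟫ = - ⟪fgrad p, z - p⟫ := inner_neg_left _ _
  rw [hneg]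
  linarith
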